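/- Let M ⊆ ℝ^N be compact, f : M → ℝ^{k+1} continuous with a Lagrangian dual section D, and suppose C = conv(f_CM(M)) ⊆ ℝ^k is full-dimensional, where f_CM = (f_1, …, f_k). Then the map φ : H_k → C defined by φ(t) = f_CM(D(t)), where H_k = {t ∈ ℝ^{k+1} : t_0 ≥ 0, ‖t‖ = 1}, is surjective. -/

import Mathlib

open scoped BigOperators

private lemma stmt18_sumsq_nonneg {k : ℕ} (s : Fin k → ℝ) : (0:ℝ) ≤ ∑ i, s i ^ 2 :=
  Finset.sum_nonneg fun _ _ => sq_nonneg _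

private def stmt18_cc {k : ℕ} (s : Fin k → ℝ) : Fin (k + 1) → ℝ := Fin.cons 1 s

private noncomputable def stmt18_qq {k : ℕ} (s : Fin k → ℝ) : ℝ :=
  Real.sqrt (1 + ∑ i, s i ^ 2)

private lemma stmt18_qq_pos {k : ℕ} (s : Fin k → ℝ) : 0 < stmt18_qq s :=
  Real.sqrt_pos.2 (by nlinarith [stmt18_sumsq_nonneg s])

private lemma stmt18_qq_sq {k : ℕ} (s : Fin k → ℝ) :
    stmt18_qq s ^ 2 = 1 + ∑ i, s i ^ 2 :=
  Real.sq_sqrt (by nlinarith [stmt18_sumsq_nonneg s])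

private noncomputable def stmt18_TT {k : ℕ} (s : Fin k → ℝ) :
    {t : Fin (k + 1) → ℝ // 0 ≤ t 0 ∧ t ≠ 0} :=
  ⟨(stmt18_qq s)⁻¹ • stmt18_cc s, by
    have h0 : ((stmt18_qq s)⁻¹ • stmt18_cc s) 0 = (stmt18_qq s)⁻¹ := by
      simp [stmt18_cc]
    constructor
    · rw [h0]; exact (inv_pos.2 (stmt18_qq_pos s)).le
    · intro hcon
      have h1 := congrFun hcon 0
      rw [h0, Pi.zero_apply, inv_eq_zero] at h1
      exact (stmt18_qq_pos s).ne' h1⟩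

private lemma stmt18_TT_val {k : ℕ} (s : Fin k → ℝ) :
    (stmt18_TT s).1 = (stmt18_qq s)⁻¹ • stmt18_cc s := rfl

private lemma stmt18_cons_cont {k : ℕ} :
    Continuous fun s : Fin k → ℝ => stmt18_cc s := by
  unfold stmt18_cc
  apply continuous_pi
  intro i
  induction i using Fin.cases with
  | zero => simp only [Fin.cons_zero]; exact continuous_const
  | succ j => simp only [Fin.cons_succ]; exact continuous_apply j

private lemma stmt18_qq_cont {k : ℕ} : Continuous (stmt18_qq (k := k)) := by
  apply Real.continuous_sqrt.comp
  exact continuous_const.add (continuous_finset_sum _ fun i _ => (continuous_apply i).pow 2)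

private lemma stmt18_TT_cont {k : ℕ} : Continuous (stmt18_TT (k := k)) := by
  apply Continuous.subtype_mk
  exact (stmt18_qq_cont.inv₀ fun s => (stmt18_qq_pos s).ne').smul stmt18_cons_cont

private lemma stmt18_TT_sumsq {k : ℕ} (s : Fin k → ℝ) :
    ∑ i, (stmt18_TT s).1 i ^ 2 = 1 := by
  rw [stmt18_TT_val]
  simp only [stmt18_cc, Pi.smul_apply, smul_eq_mul, mul_pow]
  rw [← Finset.mul_sum, Fin.sum_univ_succ]
  simp only [Fin.cons_zero, Fin.cons_succ, one_pow]
  rw [← stmt18_qq_sq s, inv_pow, inv_mul_cancel₀ (pow_ne_zero 2 (stmt18_qq_pos s).ne')]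

private lemma stmt18_expand {N k : ℕ} (f : (Fin N → ℝ) → (Fin (k + 1) → ℝ))
    (s : Fin k → ℝ) (z : Fin N → ℝ) :
    ∑ i, (stmt18_TT s).1 i * f z i
      = (stmt18_qq s)⁻¹ * (f z 0 + ∑ i, s i * f z i.succ) := by
  rw [stmt18_TT_val, Fin.sum_univ_succ]
  simp only [stmt18_cc, Pi.smul_apply, smul_eq_mul, Fin.cons_zero, Fin.cons_succ]
  rw [mul_add, Finset.mul_sum, mul_one]
  congr 1
  exact Finset.sum_congr rfl fun i _ => by ring

private lemma stmt18_interior {N k : ℕ} (M : Set (Fin N → ℝ)) (hM : IsCompact M)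
    (f : (Fin N → ℝ) → (Fin (k + 1) → ℝ)) (hf : ContinuousOn f M)
    (D : {t : Fin (k + 1) → ℝ // 0 ≤ t 0 ∧ t ≠ 0} → (Fin N → ℝ))
    (hDmem : ∀ t, D t ∈ M) (hD : Continuous D)
    (hmax : ∀ t : {t : Fin (k + 1) → ℝ // 0 ≤ t 0 ∧ t ≠ 0}, ∀ x ∈ M,
      ∑ i, t.1 i * f x i ≤ ∑ i, t.1 i * f (D t) i)
    (hMne : M.Nonempty)
    (y : Fin k → ℝ)
    (hy : y ∈ interior (convexHull ℝ ((fun x => fun i : Fin k => f x i.succ) '' M))) :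
    ∃ t : {t : Fin (k + 1) → ℝ // 0 ≤ t 0 ∧ t ≠ 0},
      (∑ i, t.1 i ^ 2 = 1) ∧ (fun i : Fin k => f (D t) i.succ) = y := by
  classical
  set C := convexHull ℝ ((fun x => fun i : Fin k => f x i.succ) '' M) with hCdef
  -- scaled maximality
  have L1 : ∀ s : Fin k → ℝ, ∀ x ∈ M,
      f x 0 + ∑ i, s i * f x i.succ
        ≤ f (D (stmt18_TT s)) 0 + ∑ i, s i * f (D (stmt18_TT s)) i.succ := by
    intro s x hx
    have h := hmax (stmt18_TT s) x hx
    rw [stmt18_expand f s x, stmt18_expand f s (D (stmt18_TT s))] at h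
    exact (mul_le_mul_iff_right₀ (inv_pos.2 (stmt18_qq_pos s))).1 h
  -- continuity
  have hFD : Continuous fun t : {t : Fin (k + 1) → ℝ // 0 ≤ t 0 ∧ t ≠ 0} => f (D t) :=
    hf.comp_continuous hD hDmem
  have hgCont : ∀ i : Fin (k+1), Continuous fun s : Fin k → ℝ => f (D (stmt18_TT s)) i :=
    fun i => (continuous_apply i).comp (hFD.comp stmt18_TT_cont)
  set hfun : (Fin k → ℝ) → ℝ :=
    fun s => f (D (stmt18_TT s)) 0 + ∑ i, s i * f (D (stmt18_TT s)) i.succ with hhdef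
  have hhCont : Continuous hfun :=
    (hgCont 0).add (continuous_finset_sum _ fun i _ =>
      (continuous_apply i).mul (hgCont i.succ))
  -- minimum of f_0 on M
  obtain ⟨x₀, hx₀M, hx₀'⟩ := hM.exists_isMinOn hMne
    ((continuous_apply (0 : Fin (k+1))).comp_continuousOn hf)
  have hx₀ : ∀ x ∈ M, f x₀ 0 ≤ f x 0 := fun x hx => hx₀' hx
  set m : ℝ := f x₀ 0 with hmdef
  -- radius of interior ball
  obtain ⟨δ, hδpos, hδ⟩ := Metric.mem_nhds_iff.1 (mem_interior_iff_mem_nhds.1 hy)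
  -- halfspace bound
  have halfspace : ∀ s : Fin k → ℝ, ∀ z ∈ C, ∑ i, s i * z i ≤ hfun s - m := by
    intro s z hz
    have hlin : IsLinearMap ℝ fun w : Fin k → ℝ => ∑ i, s i * w i := by
      constructor
      · intro a b; simp [mul_add, Finset.sum_add_distrib]
      · intro c a; simp [Finset.mul_sum, smul_eq_mul, mul_left_comm]
    refine convexHull_min ?_ (convex_halfSpace_le hlin _) hz
    rintro _ ⟨x, hx, rfl⟩
    simp only [Set.mem_setOf_eq, hhdef]
    have h1 := L1 s x hx
    have h2 := hx₀ x hx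
    linarith
  -- coercivity
  have coercive : ∀ s : Fin k → ℝ, m + δ/2 * ‖s‖ ≤ hfun s - ∑ i, s i * y i := by
    intro s
    by_cases hs : s = 0
    · subst hs
      have h1 := L1 0 x₀ hx₀M
      simp only [hhdef]
      simp only [Pi.zero_apply, zero_mul, Finset.sum_const_zero, add_zero, norm_zero,
        mul_zero] at h1 ⊢
      linarith
    · set E : ℝ := Real.sqrt (∑ i, s i ^ 2) with hEdef
      have hEpos : 0 < E := by
        apply Real.sqrt_pos.2
        obtain ⟨i, hi⟩ := Function.ne_iff.1 hs
        have hi' : s i ≠ 0 := by simpa using hi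
        have h1 : 0 < s i ^ 2 := by positivity
        have h2 : s i ^ 2 ≤ ∑ j, s j ^ 2 := Finset.single_le_sum (f := fun j => s j ^ 2)
          (fun j _ => sq_nonneg _) (Finset.mem_univ i)
        linarith
      have hEsq : E ^ 2 = ∑ i, s i ^ 2 := Real.sq_sqrt (stmt18_sumsq_nonneg s)
      have hnormE : ‖s‖ ≤ E := by
        rw [pi_norm_le_iff_of_nonneg hEpos.le]
        intro i
        rw [Real.norm_eq_abs, ← Real.sqrt_sq_eq_abs]
        have h2 : s i ^ 2 ≤ ∑ j, s j ^ 2 := Finset.single_le_sum (f := fun j => s j ^ 2)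
          (fun j _ => sq_nonneg _) (Finset.mem_univ i)
        exact Real.sqrt_le_sqrt h2
      set z : Fin k → ℝ := y + (δ / (2 * E)) • s with hzdef
      have hzC : z ∈ C := by
        apply hδ
        rw [Metric.mem_ball, dist_eq_norm]
        have : z - y = (δ / (2 * E)) • s := by rw [hzdef]; abel
        rw [this, norm_smul, Real.norm_eq_abs, abs_of_pos (by positivity)]
        calc δ / (2 * E) * ‖s‖ ≤ δ / (2 * E) * E := by
              apply mul_le_mul_of_nonneg_left hnormE (by positivity)
          _ = δ / 2 := by field_simp
          _ < δ := by linarith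
      have hzval : ∑ i, s i * z i = ∑ i, s i * y i + δ / (2 * E) * ∑ i, s i ^ 2 := by
        rw [Finset.mul_sum, ← Finset.sum_add_distrib]
        refine Finset.sum_congr rfl fun i _ => ?_
        simp only [hzdef, Pi.add_apply, Pi.smul_apply, smul_eq_mul]
        ring
      have h3 := halfspace s z hzC
      rw [hzval, ← hEsq] at h3
      have h4 : δ / (2 * E) * E ^ 2 = δ / 2 * E := by field_simp
      rw [h4] at h3
      nlinarith [mul_le_mul_of_nonneg_left hnormE (by positivity : (0:ℝ) ≤ δ/2)]
  -- global minimizer of H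
  set H : (Fin k → ℝ) → ℝ := fun s => hfun s - ∑ i, s i * y i with hHdef
  have hHCont : Continuous H := hhCont.sub
    (continuous_finset_sum _ fun i _ => (continuous_apply i).mul continuous_const)
  set R : ℝ := (|H 0 - m| + 1) * (2 / δ) with hRdef
  have hRpos : 0 < R := by positivity
  clear_value R
  obtain ⟨s₀, hs₀B, hs₀min'⟩ := (isCompact_closedBall (0 : Fin k → ℝ) R).exists_isMinOn
    ⟨0, Metric.mem_closedBall_self hRpos.le⟩ hHCont.continuousOn
  have hs₀min : ∀ s ∈ Metric.closedBall (0 : Fin k → ℝ) R, H s₀ ≤ H s :=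
    fun s hs => hs₀min' hs
  clear_value hfun m H
  have hglobal : ∀ s, H s₀ ≤ H s := by
    intro s
    by_cases hsB : s ∈ Metric.closedBall (0 : Fin k → ℝ) R
    · exact hs₀min s hsB
    · have hns : R < ‖s‖ := by
        rw [Metric.mem_closedBall, dist_zero_right, not_le] at hsB
        exact hsB
      have h1 := coercive s
      have h2 := hs₀min 0 (Metric.mem_closedBall_self hRpos.le)
      have h3 : δ / 2 * R = |H 0 - m| + 1 := by rw [hRdef]; field_simp
      have h4 : H 0 - m ≤ |H 0 - m| := le_abs_self _
      have h5 : δ / 2 * R < δ / 2 * ‖s‖ :=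
        mul_lt_mul_of_pos_left hns (by positivity)
      simp only [hHdef] at h1 h2 h3 h4 ⊢
      simp only [Pi.zero_apply, zero_mul, Finset.sum_const_zero, sub_zero] at h2 h3 h4
      linarith
  -- the gradient vanishes at the minimizer
  set v : Fin k → ℝ := fun i => f (D (stmt18_TT s₀)) i.succ - y i with hvdef
  have hFle : ∀ ε : ℝ, 0 < ε →
      ∑ i, v i * (f (D (stmt18_TT (fun j => s₀ j - ε * v j))) i.succ - y i) ≤ 0 := by
    intro ε hε
    set s : Fin k → ℝ := fun j => s₀ j - ε * v j with hsdef
    have hA := L1 s₀ (D (stmt18_TT s)) (hDmem _)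
    have hB := hglobal s
    simp only [hHdef, hhdef] at hB
    have e1 : ∑ i, s i * f (D (stmt18_TT s)) i.succ
        = ∑ i, s₀ i * f (D (stmt18_TT s)) i.succ
          - ε * ∑ i, v i * f (D (stmt18_TT s)) i.succ := by
      rw [Finset.mul_sum, ← Finset.sum_sub_distrib]
      exact Finset.sum_congr rfl fun i _ => by simp only [hsdef]; ring
    have e2 : ∑ i, s i * y i = ∑ i, s₀ i * y i - ε * ∑ i, v i * y i := by
      rw [Finset.mul_sum, ← Finset.sum_sub_distrib]
      exact Finset.sum_congr rfl fun i _ => by simp only [hsdef]; ring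
    have e3 : ∑ i, v i * (f (D (stmt18_TT s)) i.succ - y i)
        = ∑ i, v i * f (D (stmt18_TT s)) i.succ - ∑ i, v i * y i := by
      rw [← Finset.sum_sub_distrib]
      exact Finset.sum_congr rfl fun i _ => by ring
    rw [e1, e2] at hB
    rw [e3]
    have h5 : ε * (∑ i, v i * f (D (stmt18_TT s)) i.succ - ∑ i, v i * y i) ≤ ε * 0 := by
      rw [mul_zero, mul_sub]
      linarith
    linarith [(mul_le_mul_iff_right₀ hε).1 h5]
  have hFcont : Continuous fun ε : ℝ =>
      ∑ i, v i * (f (D (stmt18_TT (fun j => s₀ j - ε * v j))) i.succ - y i) := by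
    apply continuous_finset_sum
    intro i _
    apply continuous_const.mul
    apply Continuous.sub _ continuous_const
    exact (hgCont i.succ).comp (continuous_pi fun j =>
      continuous_const.sub (continuous_id.mul continuous_const))
  have hlim : ∑ i, v i * (f (D (stmt18_TT (fun j => s₀ j - 0 * v j))) i.succ - y i) ≤ 0 := by
    have ht : Filter.Tendsto
        (fun ε : ℝ => ∑ i, v i * (f (D (stmt18_TT (fun j => s₀ j - ε * v j))) i.succ - y i))
        (nhdsWithin 0 (Set.Ioi 0))
        (nhds (∑ i, v i * (f (D (stmt18_TT (fun j => s₀ j - 0 * v j))) i.succ - y i))) :=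
      (hFcont.tendsto 0).mono_left nhdsWithin_le_nhds
    exact le_of_tendsto ht (eventually_nhdsWithin_of_forall fun ε hε => hFle ε hε)
  have hs₀eq : (fun j => s₀ j - 0 * v j) = s₀ := by funext j; ring
  rw [hs₀eq] at hlim
  have hvv : ∑ i, v i * v i ≤ 0 := by
    calc ∑ i, v i * v i
        = ∑ i, v i * (f (D (stmt18_TT s₀)) i.succ - y i) :=
          Finset.sum_congr rfl fun i _ => by rw [hvdef]
      _ ≤ 0 := hlim
  have hvzero : ∀ i, v i = 0 := by
    intro i
    have hnn : ∀ j ∈ Finset.univ, (0:ℝ) ≤ v j * v j := fun j _ => mul_self_nonneg _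
    have hsum0 : ∑ i, v i * v i = 0 := le_antisymm hvv (Finset.sum_nonneg hnn)
    have := (Finset.sum_eq_zero_iff_of_nonneg hnn).1 hsum0 i (Finset.mem_univ i)
    exact mul_self_eq_zero.1 this
  refine ⟨stmt18_TT s₀, stmt18_TT_sumsq s₀, ?_⟩
  funext i
  have := hvzero i
  simp only [hvdef] at this
  linarith

theorem stmt_18 {N k : ℕ} (M : Set (Fin N → ℝ)) (hM : IsCompact M)
    (f : (Fin N → ℝ) → (Fin (k + 1) → ℝ)) (hf : ContinuousOn f M)
    (D : {t : Fin (k + 1) → ℝ // 0 ≤ t 0 ∧ t ≠ 0} → (Fin N → ℝ))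
    (hDmem : ∀ t, D t ∈ M) (hD : Continuous D)
    (hmax : ∀ t : {t : Fin (k + 1) → ℝ // 0 ≤ t 0 ∧ t ≠ 0}, ∀ x ∈ M,
      ∑ i, t.1 i * f x i ≤ ∑ i, t.1 i * f (D t) i)
    (hfull : (interior (convexHull ℝ ((fun x => fun i : Fin k => f x i.succ) '' M))).Nonempty) :
    ∀ y ∈ convexHull ℝ ((fun x => fun i : Fin k => f x i.succ) '' M),
      ∃ t : {t : Fin (k + 1) → ℝ // 0 ≤ t 0 ∧ t ≠ 0},
        (∑ i, t.1 i ^ 2 = 1) ∧ (fun i : Fin k => f (D t) i.succ) = y := by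
  classical
  intro y hy
  have hMne : M.Nonempty := by
    by_contra h
    rw [Set.not_nonempty_iff_eq_empty] at h
    obtain ⟨w, hw⟩ := hfull
    rw [h] at hw
    simp at hw
  set C := convexHull ℝ ((fun x => fun i : Fin k => f x i.succ) '' M) with hCdef
  -- the set of attained values
  set A : Set (Fin k → ℝ) :=
    (fun t : {t : Fin (k + 1) → ℝ // 0 ≤ t 0 ∧ t ≠ 0} => fun i : Fin k => f (D t) i.succ) ''
      {t : {t : Fin (k + 1) → ℝ // 0 ≤ t 0 ∧ t ≠ 0} | ∑ i, t.1 i ^ 2 = 1} with hAdef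
  have hintA : interior C ⊆ A := by
    intro w hw
    obtain ⟨t, ht1, ht2⟩ := stmt18_interior M hM f hf D hDmem hD hmax hMne w hw
    exact ⟨t, ht1, ht2⟩
  have hAcompact : IsCompact A := by
    apply IsCompact.image _ (by
      apply continuous_pi
      intro i
      exact (continuous_apply i.succ).comp (hf.comp_continuous hD hDmem))
    -- compactness of the hemisphere in the subtype
    rw [Topology.IsEmbedding.isCompact_iff (Topology.IsEmbedding.subtypeVal)]
    have himg : Subtype.val '' {t : {t : Fin (k + 1) → ℝ // 0 ≤ t 0 ∧ t ≠ 0} |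
        ∑ i, t.1 i ^ 2 = 1}
        = {t : Fin (k + 1) → ℝ | 0 ≤ t 0 ∧ ∑ i, t i ^ 2 = 1} := by
      ext p
      constructor
      · rintro ⟨⟨t, ht0, htne⟩, hts, rfl⟩
        exact ⟨ht0, hts⟩
      · rintro ⟨hp0, hps⟩
        have hpne : p ≠ 0 := by
          intro h
          rw [h] at hps
          simp at hps
        exact ⟨⟨p, hp0, hpne⟩, hps, rfl⟩
    rw [himg]
    apply IsCompact.of_isClosed_subset (isCompact_closedBall (0 : Fin (k+1) → ℝ) 1)
    · exact IsClosed.inter (isClosed_le continuous_const (continuous_apply 0))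
        (isClosed_eq (continuous_finset_sum _ fun i _ => (continuous_apply i).pow 2)
          continuous_const)
    · intro p hp
      rw [Metric.mem_closedBall, dist_zero_right]
      rw [pi_norm_le_iff_of_nonneg zero_le_one]
      intro i
      rw [Real.norm_eq_abs, ← Real.sqrt_one, ← Real.sqrt_sq_eq_abs]
      apply Real.sqrt_le_sqrt
      rw [← hp.2]
      exact Finset.single_le_sum (f := fun j => p j ^ 2)
        (fun j _ => sq_nonneg _) (Finset.mem_univ i)
  have hAclosed : IsClosed A := hAcompact.isClosed
  -- y is a limit of interior points
  obtain ⟨w, hw⟩ := hfull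
  have hconv : Convex ℝ C := convex_convexHull ℝ _
  have htend : Filter.Tendsto (fun t : ℝ => y + t • (w - y)) (nhdsWithin 0 (Set.Ioi 0))
      (nhds y) := by
    have hcont : Continuous fun t : ℝ => y + t • (w - y) :=
      continuous_const.add (continuous_id.smul continuous_const)
    have h := hcont.tendsto 0
    rw [show y + (0:ℝ) • (w - y) = y by simp] at h
    exact h.mono_left nhdsWithin_le_nhds
  have hmem : ∀ᶠ t in nhdsWithin (0:ℝ) (Set.Ioi 0), (y + t • (w - y)) ∈ A := by
    have hIoc : Set.Ioc (0:ℝ) 1 ∈ nhdsWithin (0:ℝ) (Set.Ioi 0) :=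
      Ioc_mem_nhdsGT_of_mem (by constructor <;> norm_num)
    filter_upwards [hIoc] with t ht
    exact hintA (hconv.add_smul_sub_mem_interior hy hw ht)
  have : y ∈ A := hAclosed.mem_of_frequently_of_tendsto (hmem.frequently) htend
  obtain ⟨t, ht1, ht2⟩ := this
  exact ⟨t, ht1, ht2⟩
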